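/- Let m, n be positive integers and write m̄ = m mod 13, n̄ = n mod 13. For i ∈ {0,…,12}, let N(m,n,i) be the number of pairs (a,b) of integers with 1 ≤ a ≤ n, 1 ≤ b ≤ m, and 4a + 7b ≡ i (mod 13). Then min over i ∈ {0,…,12} of N(m,n,i) equals ⌊mn/13⌋ − δ, where δ = 1 if (m̄,n̄) belongs to the set Φ = {(2,7),(3,9),(4,4),(4,7),(4,10),(6,7),(6,9),(6,11),(7,2),(7,4),(7,6),(9,3),(9,6),(9,9),(10,4),(11,6)} and δ = 0 otherwise. -/

import Mathlib

def Phi : List (ℕ × ℕ) :=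
  [(2, 7), (3, 9), (4, 4), (4, 7), (4, 10), (6, 7), (6, 9), (6, 11),
   (7, 2), (7, 4), (7, 6), (9, 3), (9, 6), (9, 9), (10, 4), (11, 6)]

lemma row (k b i : ℤ) (hi0 : 0 ≤ i) (hi : i < 13) :
    ((Finset.Icc (k+1) (k+13)).filter (fun a => (4*a+7*b) % 13 = i)).card = 1 := by
  refine Finset.card_eq_one.mpr ⟨k + 1 + ((i - 7*b - 4*(k+1)) * 10) % 13, ?_⟩
  set w := k + 1 + ((i - 7*b - 4*(k+1)) * 10) % 13 with hwdef
  have hw1 : k + 1 ≤ w := by omega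
  have hw2 : w ≤ k + 13 := by omega
  have hw3 : (4*w+7*b) % 13 = i := by omega
  ext a
  simp only [Finset.mem_filter, Finset.mem_Icc, Finset.mem_singleton]
  constructor
  · rintro ⟨⟨h3, h4⟩, h⟩
    have d1 : (13:ℤ) ∣ 4*(a - w) := by omega
    have d2 : (13:ℤ) ∣ (a - w) := by omega
    omega
  · rintro rfl
    exact ⟨⟨hw1, hw2⟩, hw3⟩

lemma col (k a i : ℤ) (hi0 : 0 ≤ i) (hi : i < 13) :
    ((Finset.Icc (k+1) (k+13)).filter (fun b => (4*a+7*b) % 13 = i)).card = 1 := by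
  refine Finset.card_eq_one.mpr ⟨k + 1 + ((i - 4*a - 7*(k+1)) * 2) % 13, ?_⟩
  set w := k + 1 + ((i - 4*a - 7*(k+1)) * 2) % 13 with hwdef
  have hw1 : k + 1 ≤ w := by omega
  have hw2 : w ≤ k + 13 := by omega
  have hw3 : (4*a+7*w) % 13 = i := by omega
  ext b
  simp only [Finset.mem_filter, Finset.mem_Icc, Finset.mem_singleton]
  constructor
  · rintro ⟨⟨h3, h4⟩, h⟩
    have d1 : (13:ℤ) ∣ 7*(b - w) := by omega
    have d2 : (13:ℤ) ∣ (b - w) := by omega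
    omega
  · rintro rfl
    exact ⟨⟨hw1, hw2⟩, hw3⟩

noncomputable def F (m n i : ℕ) : ℕ :=
  ((Finset.Icc (1 : ℤ) n ×ˢ Finset.Icc (1 : ℤ) m).filter
    (fun p => (4 * p.1 + 7 * p.2) % 13 = (i : ℤ))).card

lemma Icc_split (n : ℕ) : Finset.Icc (1:ℤ) ((n:ℤ)+13)
    = Finset.Icc (1:ℤ) (n:ℤ) ∪ Finset.Icc ((n:ℤ)+1) ((n:ℤ)+13) := by
  ext x
  simp only [Finset.mem_Icc, Finset.mem_union]
  omega

lemma Icc_disj (n : ℕ) : Disjoint (Finset.Icc (1:ℤ) (n:ℤ)) (Finset.Icc ((n:ℤ)+1) ((n:ℤ)+13)) := by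
  rw [Finset.disjoint_left]
  intro x hx hx'
  simp only [Finset.mem_Icc] at hx hx'
  omega

lemma stepN (m n i : ℕ) (hi : i < 13) : F m (n+13) i = F m n i + m := by
  have hsum : ∀ M N : ℤ, ((Finset.Icc (1 : ℤ) N ×ˢ Finset.Icc (1 : ℤ) M).filter
      (fun p => (4 * p.1 + 7 * p.2) % 13 = (i : ℤ))).card
      = ∑ b ∈ Finset.Icc (1:ℤ) M, ∑ a ∈ Finset.Icc (1:ℤ) N,
        (if (4*a+7*b) % 13 = (i:ℤ) then 1 else 0) := by
    intro M N
    rw [Finset.card_filter, Finset.sum_product_right]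
  show ((Finset.Icc (1 : ℤ) ((n+13:ℕ):ℤ) ×ˢ Finset.Icc (1 : ℤ) (m:ℤ)).filter _).card = _
  have hcast : ((n + 13 : ℕ) : ℤ) = (n : ℤ) + 13 := by push_cast; ring
  rw [hcast, hsum]
  have hrow : ∀ b ∈ Finset.Icc (1:ℤ) (m:ℤ),
      (∑ a ∈ Finset.Icc (1:ℤ) ((n:ℤ)+13), (if (4*a+7*b) % 13 = (i:ℤ) then 1 else 0))
      = (∑ a ∈ Finset.Icc (1:ℤ) (n:ℤ), (if (4*a+7*b) % 13 = (i:ℤ) then 1 else 0)) + 1 := by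
    intro b _
    rw [Icc_split n, Finset.sum_union (Icc_disj n)]
    congr 1
    rw [← Finset.card_filter]
    exact row (n:ℤ) b (i:ℤ) (by positivity) (by exact_mod_cast hi)
  rw [Finset.sum_congr rfl hrow, Finset.sum_add_distrib, ← hsum, Finset.sum_const, smul_eq_mul,
    mul_one, Int.card_Icc]
  show F m n i + _ = _
  congr 1
  omega

lemma stepM (m n i : ℕ) (hi : i < 13) : F (m+13) n i = F m n i + n := by
  have hsum : ∀ M N : ℤ, ((Finset.Icc (1 : ℤ) N ×ˢ Finset.Icc (1 : ℤ) M).filter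
      (fun p => (4 * p.1 + 7 * p.2) % 13 = (i : ℤ))).card
      = ∑ a ∈ Finset.Icc (1:ℤ) N, ∑ b ∈ Finset.Icc (1:ℤ) M,
        (if (4*a+7*b) % 13 = (i:ℤ) then 1 else 0) := by
    intro M N
    rw [Finset.card_filter, Finset.sum_product]
  show ((Finset.Icc (1 : ℤ) (n:ℤ) ×ˢ Finset.Icc (1 : ℤ) ((m+13:ℕ):ℤ)).filter _).card = _
  have hcast : ((m + 13 : ℕ) : ℤ) = (m : ℤ) + 13 := by push_cast; ring
  rw [hcast, hsum]
  have hcol : ∀ a ∈ Finset.Icc (1:ℤ) (n:ℤ),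
      (∑ b ∈ Finset.Icc (1:ℤ) ((m:ℤ)+13), (if (4*a+7*b) % 13 = (i:ℤ) then 1 else 0))
      = (∑ b ∈ Finset.Icc (1:ℤ) (m:ℤ), (if (4*a+7*b) % 13 = (i:ℤ) then 1 else 0)) + 1 := by
    intro a _
    rw [Icc_split m, Finset.sum_union (Icc_disj m)]
    congr 1
    rw [← Finset.card_filter]
    exact col (m:ℤ) a (i:ℤ) (by positivity) (by exact_mod_cast hi)
  rw [Finset.sum_congr rfl hcol, Finset.sum_add_distrib, ← hsum, Finset.sum_const, smul_eq_mul,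
    mul_one, Int.card_Icc]
  show F m n i + _ = _
  congr 1
  omega

lemma himg (m n : ℕ) : ((Finset.range 13).image (F m n)).Nonempty :=
  (Finset.nonempty_range_iff.mpr (by norm_num)).image _

noncomputable def Fmin (m n : ℕ) : ℕ := ((Finset.range 13).image (F m n)).min' (himg m n)

lemma FminStepN (m n : ℕ) : Fmin m (n+13) = Fmin m n + m := by
  apply le_antisymm
  · obtain ⟨i, hi, hFi⟩ := Finset.mem_image.mp (Finset.min'_mem _ (himg m n))
    have hmem : F m (n+13) i ∈ (Finset.range 13).image (F m (n+13)) :=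
      Finset.mem_image_of_mem _ hi
    have h := Finset.min'_le _ _ hmem
    have h' : F m (n+13) i = Fmin m n + m := by
      rw [stepN m n i (Finset.mem_range.mp hi), hFi]; rfl
    exact le_of_le_of_eq h h'
  · apply Finset.le_min'
    intro y hy
    obtain ⟨i, hi, rfl⟩ := Finset.mem_image.mp hy
    rw [stepN m n i (Finset.mem_range.mp hi)]
    have hmem : F m n i ∈ (Finset.range 13).image (F m n) := Finset.mem_image_of_mem _ hi
    exact Nat.add_le_add_right (Finset.min'_le _ _ hmem) m

lemma FminStepM (m n : ℕ) : Fmin (m+13) n = Fmin m n + n := by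
  apply le_antisymm
  · obtain ⟨i, hi, hFi⟩ := Finset.mem_image.mp (Finset.min'_mem _ (himg m n))
    have hmem : F (m+13) n i ∈ (Finset.range 13).image (F (m+13) n) :=
      Finset.mem_image_of_mem _ hi
    have h := Finset.min'_le _ _ hmem
    have h' : F (m+13) n i = Fmin m n + n := by
      rw [stepM m n i (Finset.mem_range.mp hi), hFi]; rfl
    exact le_of_le_of_eq h h'
  · apply Finset.le_min'
    intro y hy
    obtain ⟨i, hi, rfl⟩ := Finset.mem_image.mp hy
    rw [stepM m n i (Finset.mem_range.mp hi)]
    have hmem : F m n i ∈ (Finset.range 13).image (F m n) := Finset.mem_image_of_mem _ hi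
    exact Nat.add_le_add_right (Finset.min'_le _ _ hmem) n

set_option maxHeartbeats 4000000 in
lemma aux : ∀ N m n : ℕ, m + n ≤ N → 1 ≤ m → 1 ≤ n →
    (Fmin m n : ℤ) = ↑(m * n / 13) - (if (m % 13, n % 13) ∈ Phi then 1 else 0) := by
  intro N
  induction N with
  | zero => intro m n h hm hn; omega
  | succ N ih =>
    intro m n hmn hm hn
    by_cases hn14 : 14 ≤ n
    · obtain ⟨n', rfl⟩ : ∃ n', n = n' + 13 := ⟨n - 13, by omega⟩
      have hih := ih m n' (by omega) hm (by omega)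
      rw [FminStepN]
      have hdiv : m * (n' + 13) / 13 = m * n' / 13 + m := by
        rw [show m * (n' + 13) = m * n' + 13 * m by ring,
          Nat.add_mul_div_left _ _ (by norm_num : 0 < 13)]
      have hmod : (n' + 13) % 13 = n' % 13 := by omega
      rw [hdiv, hmod]
      push_cast
      push_cast at hih
      rw [hih]
      ring
    · by_cases hm14 : 14 ≤ m
      · obtain ⟨m', rfl⟩ : ∃ m', m = m' + 13 := ⟨m - 13, by omega⟩
        have hih := ih m' n (by omega) (by omega) hn
        rw [FminStepM]
        have hdiv : (m' + 13) * n / 13 = m' * n / 13 + n := by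
          rw [show (m' + 13) * n = m' * n + 13 * n by ring,
            Nat.add_mul_div_left _ _ (by norm_num : 0 < 13)]
        have hmod : (m' + 13) % 13 = m' % 13 := by omega
        rw [hdiv, hmod]
        push_cast
        push_cast at hih
        rw [hih]
        ring
      · have hm' : m ≤ 13 := by omega
        have hn' : n ≤ 13 := by omega
        clear hmn hn14 hm14 ih
        interval_cases m <;> interval_cases n <;> decide

theorem stmt13 (m n : ℕ) (hm : 0 < m) (hn : 0 < n) :
    (Finset.min'
        ((Finset.range 13).image (fun i : ℕ =>
          ((Finset.Icc (1 : ℤ) n ×ˢ Finset.Icc (1 : ℤ) m).filter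
            (fun p => (4 * p.1 + 7 * p.2) % 13 = (i : ℤ))).card))
        ((Finset.nonempty_range_iff.mpr (by norm_num)).image _) : ℤ) =
      ⌊((m : ℚ) * (n : ℚ)) / 13⌋ - (if (m % 13, n % 13) ∈ Phi then 1 else 0) := by
  have hfloor : ⌊((m : ℚ) * (n : ℚ)) / 13⌋ = ((m * n / 13 : ℕ) : ℤ) := by
    have h1 : ((m : ℚ) * (n : ℚ)) = (((m * n : ℕ) : ℤ) : ℚ) := by push_cast; ring
    have h2 : (13 : ℚ) = ((13 : ℕ) : ℚ) := by norm_num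
    rw [h1, h2, Rat.floor_intCast_div_natCast]
    omega
  rw [hfloor]
  have him : ((Finset.range 13).image (fun i : ℕ =>
          (((Finset.Icc (1 : ℤ) n ×ˢ Finset.Icc (1 : ℤ) m).filter
            (fun p => (4 * p.1 + 7 * p.2) % 13 = (i : ℤ))).card : ℤ)))
      = ((Finset.range 13).image (F m n)).image (fun x : ℕ => (x : ℤ)) := by
    rw [Finset.image_image]
    rfl
  rw [show (Finset.min'
        ((Finset.range 13).image (fun i : ℕ =>
          (((Finset.Icc (1 : ℤ) n ×ˢ Finset.Icc (1 : ℤ) m).filter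
            (fun p => (4 * p.1 + 7 * p.2) % 13 = (i : ℤ))).card : ℤ)))
        ((Finset.nonempty_range_iff.mpr (by norm_num)).image _))
      = (((Finset.range 13).image (F m n)).image (fun x : ℕ => (x : ℤ))).min'
        (him ▸ ((Finset.nonempty_range_iff.mpr (by norm_num)).image _)) from by congr 1]
  rw [Finset.min'_image (fun a b hab => by simpa using hab : Monotone (fun x : ℕ => (x : ℤ)))]
  exact aux (m + n) m n le_rfl hm hn
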